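/- Let p ≥ 3 be an integer, M_p > 0, R > 0, and set θ = p!/(4(p+1)M_p). Let (A_k)_{k≥1} be a sequence of positive reals such that for all N ≥ 1, A_N ≥ (1/4) · θ^{2/(p+1)} / (2R^2)^{(p−1)/(p+1)} · (Σ_{k=1}^N A_k^{(p−1)/(3p+1)})^{(3p+1)/(p+1)}. Then for all k ≥ 1, A_k ≥ k^{(3p+1)/2} / (c M_p R^{p−1}), where c = 2^{(3(p+1)^2+4)/4} (p+1)/p!. -/

import Mathlib

open Finset Filter

lemma nat_sq_le_two_pow : ∀ n : ℕ, 4 ≤ n → n ^ 2 ≤ 2 ^ n := by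
  intro n hn
  induction n with
  | zero => omega
  | succ m ih =>
    rcases Nat.lt_or_ge m 4 with h | h
    · have hm : m = 3 := by omega
      subst hm; norm_num
    · have h1 := ih h
      have h2 : (m + 1) ^ 2 ≤ 2 * m ^ 2 := by nlinarith
      calc (m + 1) ^ 2 ≤ 2 * m ^ 2 := h2
        _ ≤ 2 * 2 ^ m := by omega
        _ = 2 ^ (m + 1) := by ring

lemma sum_rpow_lb (r : ℝ) (hr : 0 ≤ r) (N : ℕ) :
    (N : ℝ) ^ (r + 1) / (r + 1) ≤ ∑ k ∈ Finset.Icc 1 N, (k : ℝ) ^ r := by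
  have hr1 : (1 : ℝ) ≤ r + 1 := by linarith
  have hr1' : (0 : ℝ) < r + 1 := by linarith
  induction N with
  | zero =>
    simp [Real.zero_rpow (by positivity : r + 1 ≠ 0)]
  | succ n ih =>
    rw [Finset.sum_Icc_succ_top (by omega : 1 ≤ n + 1)]
    obtain ⟨b, hbdef⟩ : ∃ b : ℝ, b = (n : ℝ) + 1 := ⟨_, rfl⟩
    have hbpos : (0 : ℝ) < b := by rw [hbdef]; positivity
    have hcast : ((n + 1 : ℕ) : ℝ) = b := by rw [hbdef]; push_cast; ring
    rw [hcast]
    have hs : (-1 : ℝ) ≤ (n : ℝ) / b - 1 := by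
      have : (0 : ℝ) ≤ (n : ℝ) / b := by positivity
      linarith
    have h1 := one_add_mul_self_le_rpow_one_add hs hr1
    rw [add_sub_cancel] at h1
    have hb4 : b ^ (r + 1) = b ^ r * b := Real.rpow_add_one (ne_of_gt hbpos) r
    have h5 : b ^ (r + 1) * (1 + (r + 1) * ((n : ℝ) / b - 1)) ≤
        b ^ (r + 1) * (((n : ℝ) / b) ^ (r + 1)) :=
      mul_le_mul_of_nonneg_left h1 (by positivity)
    have e1 : b ^ (r + 1) * (((n : ℝ) / b) ^ (r + 1)) = (n : ℝ) ^ (r + 1) := by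
      rw [Real.div_rpow (Nat.cast_nonneg n) (le_of_lt hbpos)]
      field_simp
    have e2 : b ^ (r + 1) * ((n : ℝ) / b) = (n : ℝ) * b ^ r := by
      rw [hb4]; field_simp
    have heq : b ^ (r + 1) * (1 + (r + 1) * ((n : ℝ) / b - 1)) =
        b ^ (r + 1) - (r + 1) * b ^ r := by
      linear_combination (r + 1) * e2 - (r + 1) * hb4 - (r + 1) * b ^ r * hbdef
    have h6 : b ^ (r + 1) - (r + 1) * b ^ r ≤ (n : ℝ) ^ (r + 1) := by
      rw [← heq, ← e1]; exact h5
    have ih' : (n : ℝ) ^ (r + 1) ≤ (∑ k ∈ Finset.Icc 1 n, (k : ℝ) ^ r) * (r + 1) :=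
      (div_le_iff₀ hr1').mp ih
    rw [div_le_iff₀ hr1']
    nlinarith [ih', h6]

set_option maxHeartbeats 1000000 in
/-- Lemma A.1: if `A_N ≥ (1/4) θ^{2/(p+1)} / (2R²)^{(p-1)/(p+1)}
(∑_{k=1}^N A_k^{(p-1)/(3p+1)})^{(3p+1)/(p+1)}` for all `N ≥ 1`, with
`θ = p!/(4(p+1)M_p)`, then `A_k ≥ k^{(3p+1)/2}/(c M_p R^{p-1})` for all `k ≥ 1`,
where `c = 2^{(3(p+1)²+4)/4}(p+1)/p!`. -/
theorem lemma_c_estimate (p : ℕ) (hp : 3 ≤ p) (Mp R : ℝ) (hMp : 0 < Mp) (hR : 0 < R)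
    (A : ℕ → ℝ) (hApos : ∀ k : ℕ, 1 ≤ k → 0 < A k)
    (hrec : ∀ N : ℕ, 1 ≤ N →
      A N ≥ (1 / 4) * ((Nat.factorial p : ℝ) / (4 * ((p : ℝ) + 1) * Mp)) ^ ((2 : ℝ) / ((p : ℝ) + 1))
          / (2 * R ^ 2) ^ (((p : ℝ) - 1) / ((p : ℝ) + 1))
          * (∑ k ∈ Finset.Icc 1 N, A k ^ (((p : ℝ) - 1) / (3 * (p : ℝ) + 1)))
              ^ ((3 * (p : ℝ) + 1) / ((p : ℝ) + 1))) :
    ∀ k : ℕ, 1 ≤ k →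
      A k ≥ (k : ℝ) ^ ((3 * (p : ℝ) + 1) / 2)
        / ((2 ^ ((3 * ((p : ℝ) + 1) ^ 2 + 4) / 4) * ((p : ℝ) + 1) / (Nat.factorial p : ℝ))
            * Mp * R ^ (p - 1)) := by
  have hp3 : (3 : ℝ) ≤ (p : ℝ) := by exact_mod_cast hp
  have hppos : (0 : ℝ) < (p : ℝ) + 1 := by linarith
  have h3p : (0 : ℝ) < 3 * (p : ℝ) + 1 := by linarith
  have hFpos : (0 : ℝ) < (Nat.factorial p : ℝ) := by exact_mod_cast p.factorial_pos
  obtain ⟨β, hβdef⟩ : ∃ x : ℝ, x = ((p : ℝ) - 1) / (3 * (p : ℝ) + 1) := ⟨_, rfl⟩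
  obtain ⟨α, hαdef⟩ : ∃ x : ℝ, x = (3 * (p : ℝ) + 1) / ((p : ℝ) + 1) := ⟨_, rfl⟩
  obtain ⟨γ, hγdef⟩ : ∃ x : ℝ, x = ((p : ℝ) - 1) / ((p : ℝ) + 1) := ⟨_, rfl⟩
  obtain ⟨q, hqdef⟩ : ∃ x : ℝ, x = ((p : ℝ) + 1) / 2 := ⟨_, rfl⟩
  obtain ⟨s, hsdef⟩ : ∃ x : ℝ, x = (3 * (p : ℝ) + 1) / 2 := ⟨_, rfl⟩
  obtain ⟨w, hwdef⟩ : ∃ x : ℝ, x = 2 / ((p : ℝ) + 1) := ⟨_, rfl⟩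
  obtain ⟨θv, hθdef⟩ : ∃ x : ℝ,
    x = (Nat.factorial p : ℝ) / (4 * ((p : ℝ) + 1) * Mp) := ⟨_, rfl⟩
  obtain ⟨C, hCdef⟩ : ∃ x : ℝ, x = 1 / 4 * θv ^ ((2 : ℝ) / ((p : ℝ) + 1))
      / (2 * R ^ 2) ^ (((p : ℝ) - 1) / ((p : ℝ) + 1)) := ⟨_, rfl⟩
  -- positivity facts
  have hβpos : 0 < β := by rw [hβdef]; exact div_pos (by linarith) h3p
  have hαpos : 0 < α := by rw [hαdef]; exact div_pos h3p hppos
  have hα1 : 1 ≤ α := by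
    rw [hαdef, le_div_iff₀ hppos]; linarith
  have hγ0 : 0 ≤ γ := by rw [hγdef]; exact le_of_lt (div_pos (by linarith) hppos)
  have hγ1 : γ < 1 := by
    rw [hγdef, div_lt_one hppos]; linarith
  have hqpos : 0 < q := by rw [hqdef]; linarith
  have hspos : 0 < s := by rw [hsdef]; linarith
  have hwpos : 0 < w := by rw [hwdef]; exact div_pos two_pos hppos
  have hw1 : w ≤ 1 := by
    rw [hwdef, div_le_one hppos]; linarith
  have hθpos : 0 < θv := by
    rw [hθdef]; positivity
  have hCpos : 0 < C := by
    rw [hCdef]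
    have h1 : (0:ℝ) < θv ^ ((2 : ℝ) / ((p : ℝ) + 1)) := Real.rpow_pos_of_pos hθpos _
    have h2 : (0:ℝ) < (2 * R ^ 2) ^ (((p : ℝ) - 1) / ((p : ℝ) + 1)) :=
      Real.rpow_pos_of_pos (by positivity) _
    positivity
  -- key identities
  have hγβα : β * α = γ := by
    rw [hβdef, hαdef, hγdef]; field_simp
  have hsα : α = s - s * γ := by
    rw [hαdef, hsdef, hγdef]; field_simp; ring
  have hq1γ : q * (1 - γ) = 1 := by
    rw [hqdef, hγdef]; field_simp; try ring
  have hqγ : q * γ = q - 1 := by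
    rw [hqdef, hγdef]; field_simp; try ring
  have hsβq : s * β + 1 = q := by
    rw [hsdef, hβdef, hqdef]; field_simp; try ring
  have hαq : α * q = s := by
    rw [hαdef, hqdef, hsdef]; field_simp; try ring
  -- the recurrence, restated
  have hrec' : ∀ N : ℕ, 1 ≤ N →
      C * (∑ k ∈ Finset.Icc 1 N, A k ^ β) ^ α ≤ A N := by
    intro N hN
    have h := hrec N hN
    rw [← hβdef, ← hαdef, ← hθdef, ← hCdef] at h
    exact h
  -- uniform lower bound : C ^ q ≤ A N
  have hAuni : ∀ N : ℕ, 1 ≤ N → C ^ q ≤ A N := by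
    intro N hN
    have hANpos := hApos N hN
    have hterm : A N ^ β ≤ ∑ k ∈ Finset.Icc 1 N, A k ^ β := by
      apply Finset.single_le_sum (f := fun k => A k ^ β)
      · intro i hi
        exact le_of_lt (Real.rpow_pos_of_pos (hApos i (Finset.mem_Icc.mp hi).1) _)
      · exact Finset.mem_Icc.mpr ⟨hN, le_refl N⟩
    have h1 : C * (A N ^ β) ^ α ≤ A N := by
      calc C * (A N ^ β) ^ α ≤ C * (∑ k ∈ Finset.Icc 1 N, A k ^ β) ^ α := by
            apply mul_le_mul_of_nonneg_left _ (le_of_lt hCpos)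
            exact Real.rpow_le_rpow (le_of_lt (Real.rpow_pos_of_pos hANpos _)) hterm
              (le_of_lt hαpos)
        _ ≤ A N := hrec' N hN
    have h2 : (A N ^ β) ^ α = A N ^ γ := by
      rw [← Real.rpow_mul (le_of_lt hANpos), hγβα]
    rw [h2] at h1
    have hγpos : (0:ℝ) < A N ^ γ := Real.rpow_pos_of_pos hANpos _
    have h4 : C ≤ A N ^ (1 - γ) := by
      have h3 : A N ^ (1 - γ) * A N ^ γ = A N := by
        rw [← Real.rpow_add hANpos]; norm_num
      have h1' : C * A N ^ γ ≤ A N ^ (1 - γ) * A N ^ γ := by rw [h3]; exact h1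
      exact le_of_mul_le_mul_right h1' hγpos
    calc C ^ q ≤ (A N ^ (1 - γ)) ^ q :=
          Real.rpow_le_rpow (le_of_lt hCpos) h4 (le_of_lt hqpos)
      _ = A N := by
          rw [← Real.rpow_mul (le_of_lt hANpos)]
          rw [show (1 - γ) * q = 1 by linarith [hq1γ, mul_comm q (1-γ)]]
          exact Real.rpow_one _
  -- the fixed point constant
  obtain ⟨X, hXdef⟩ : ∃ x : ℝ, x = C * w ^ α := ⟨_, rfl⟩
  have hXpos : 0 < X := by
    rw [hXdef]; exact mul_pos hCpos (Real.rpow_pos_of_pos hwpos _)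
  obtain ⟨astar, hadef⟩ : ∃ x : ℝ, x = X ^ q := ⟨_, rfl⟩
  have hapos : 0 < astar := by rw [hadef]; exact Real.rpow_pos_of_pos hXpos _
  have hfix : C * astar ^ γ * w ^ α = astar := by
    have h1 : astar ^ γ = X ^ (q * γ) := by
      rw [hadef, ← Real.rpow_mul (le_of_lt hXpos)]
    rw [h1, hqγ, hadef]
    have h2 : X ^ (q - 1) * X = X ^ q := by
      rw [← Real.rpow_add_one (ne_of_gt hXpos)]; ring_nf
    calc C * X ^ (q - 1) * w ^ α = X ^ (q - 1) * (C * w ^ α) := by ring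
      _ = X ^ (q - 1) * X := by rw [← hXdef]
      _ = X ^ q := h2
  have hXC : astar ≤ C ^ q := by
    have h1 : X ≤ C := by
      have hw' : w ^ α ≤ 1 := Real.rpow_le_one (le_of_lt hwpos) hw1 (le_of_lt hαpos)
      calc X = C * w ^ α := hXdef
        _ ≤ C * 1 := mul_le_mul_of_nonneg_left hw' (le_of_lt hCpos)
        _ = C := mul_one C
    rw [hadef]
    exact Real.rpow_le_rpow (le_of_lt hXpos) h1 (le_of_lt hqpos)
  -- main iteration
  have hmain : ∀ i : ℕ, ∀ N : ℕ, 1 ≤ N → astar * (N : ℝ) ^ (s - s * γ ^ i) ≤ A N := by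
    intro i
    induction i with
    | zero =>
      intro N hN
      simp only [pow_zero, mul_one, sub_self, Real.rpow_zero]
      calc astar ≤ C ^ q := hXC
        _ ≤ A N := hAuni N hN
    | succ i ih =>
      intro N hN
      have hNpos : (0:ℝ) < (N : ℝ) := by exact_mod_cast hN
      obtain ⟨e, hedef⟩ : ∃ e : ℝ, e = s - s * γ ^ i := ⟨_, rfl⟩
      have hγi : γ ^ i ≤ 1 := pow_le_one₀ hγ0 (le_of_lt hγ1)
      have hγinn : 0 ≤ γ ^ i := pow_nonneg hγ0 i
      have he0 : 0 ≤ e := by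
        rw [hedef]
        have h' : s * γ ^ i ≤ s * 1 := mul_le_mul_of_nonneg_left hγi hspos.le
        linarith
      have hes : e ≤ s := by
        rw [hedef]
        have h' : 0 ≤ s * γ ^ i := mul_nonneg hspos.le hγinn
        linarith
      have heβ0 : 0 ≤ e * β := mul_nonneg he0 (le_of_lt hβpos)
      have heβq : e * β + 1 ≤ q := by
        rw [← hsβq]
        have := mul_le_mul_of_nonneg_right hes (le_of_lt hβpos)
        linarith
      have heβ1 : 0 < e * β + 1 := by linarith
      -- lower bound on the sum
      have hsum1 : astar ^ β * ((N:ℝ) ^ (e * β + 1) / (e * β + 1)) ≤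
          ∑ k ∈ Finset.Icc 1 N, A k ^ β := by
        have step1 : ∀ k ∈ Finset.Icc 1 N, astar ^ β * (k : ℝ) ^ (e * β) ≤ A k ^ β := by
          intro k hk
          have hk1 : 1 ≤ k := (Finset.mem_Icc.mp hk).1
          have hkpos : (0:ℝ) < (k:ℝ) := by exact_mod_cast hk1
          have hik := ih k hk1
          rw [← hedef] at hik
          have hik' : (astar * (k:ℝ) ^ e) ^ β ≤ A k ^ β :=
            Real.rpow_le_rpow (by positivity) hik (le_of_lt hβpos)
          calc astar ^ β * (k : ℝ) ^ (e * β) = (astar * (k:ℝ) ^ e) ^ β := by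
                rw [Real.mul_rpow (le_of_lt hapos) (by positivity),
                  ← Real.rpow_mul (le_of_lt hkpos)]
            _ ≤ A k ^ β := hik'
        calc astar ^ β * ((N:ℝ) ^ (e * β + 1) / (e * β + 1))
            ≤ astar ^ β * ∑ k ∈ Finset.Icc 1 N, (k : ℝ) ^ (e * β) := by
              apply mul_le_mul_of_nonneg_left _ (le_of_lt (Real.rpow_pos_of_pos hapos β))
              exact sum_rpow_lb (e * β) heβ0 N
          _ = ∑ k ∈ Finset.Icc 1 N, astar ^ β * (k : ℝ) ^ (e * β) := by
              rw [Finset.mul_sum]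
          _ ≤ ∑ k ∈ Finset.Icc 1 N, A k ^ β := Finset.sum_le_sum step1
      have hsum2 : astar ^ β * (w * (N:ℝ) ^ (e * β + 1)) ≤
          ∑ k ∈ Finset.Icc 1 N, A k ^ β := by
        refine le_trans (mul_le_mul_of_nonneg_left ?_
          (le_of_lt (Real.rpow_pos_of_pos hapos β))) hsum1
        rw [hwdef]
        rw [div_mul_eq_mul_div, div_le_div_iff₀ hppos heβ1]
        have hN1 : (0:ℝ) ≤ (N:ℝ) ^ (e * β + 1) := by positivity
        have h2q : 2 * (e * β + 1) ≤ (p:ℝ) + 1 := by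
          rw [hqdef] at heβq; linarith
        calc 2 * (N:ℝ) ^ (e * β + 1) * (e * β + 1)
            = (N:ℝ) ^ (e * β + 1) * (2 * (e * β + 1)) := by ring
          _ ≤ (N:ℝ) ^ (e * β + 1) * ((p:ℝ) + 1) := mul_le_mul_of_nonneg_left h2q hN1
      -- apply the recurrence
      have hA : C * (astar ^ β * (w * (N:ℝ) ^ (e * β + 1))) ^ α ≤ A N := by
        refine le_trans (mul_le_mul_of_nonneg_left ?_ (le_of_lt hCpos)) (hrec' N hN)
        exact Real.rpow_le_rpow (by positivity) hsum2 (le_of_lt hαpos)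
      have hexpand : C * (astar ^ β * (w * (N:ℝ) ^ (e * β + 1))) ^ α =
          astar * (N:ℝ) ^ ((e * β + 1) * α) := by
        rw [Real.mul_rpow (by positivity) (by positivity),
          Real.mul_rpow (le_of_lt hwpos) (by positivity),
          ← Real.rpow_mul (le_of_lt hapos), ← Real.rpow_mul (le_of_lt hNpos),
          hγβα]
        calc C * (astar ^ γ * (w ^ α * (N:ℝ) ^ ((e * β + 1) * α)))
            = (C * astar ^ γ * w ^ α) * (N:ℝ) ^ ((e * β + 1) * α) := by ring
          _ = astar * (N:ℝ) ^ ((e * β + 1) * α) := by rw [hfix]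
      have hexp : (e * β + 1) * α = s - s * γ ^ (i + 1) := by
        rw [hedef, pow_succ]
        linear_combination (s - s * γ ^ i) * hγβα + hsα
      rw [hexpand, hexp] at hA
      exact hA
  -- pass to the limit
  intro k hk
  have hkpos : (0:ℝ) < (k:ℝ) := by exact_mod_cast hk
  have hlim : astar * (k:ℝ) ^ s ≤ A k := by
    have h1 : Filter.Tendsto (fun i : ℕ => s - s * γ ^ i) Filter.atTop (nhds s) := by
      have h0 : Filter.Tendsto (fun i : ℕ => γ ^ i) Filter.atTop (nhds 0) :=
        tendsto_pow_atTop_nhds_zero_of_lt_one hγ0 hγ1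
      have := Filter.Tendsto.const_mul s h0
      have h2 := Filter.Tendsto.const_sub s this
      simpa using h2
    have h3 : Filter.Tendsto (fun i : ℕ => astar * (k:ℝ) ^ (s - s * γ ^ i))
        Filter.atTop (nhds (astar * (k:ℝ) ^ s)) := by
      apply Filter.Tendsto.const_mul
      exact (Real.continuousAt_const_rpow (ne_of_gt hkpos)).tendsto.comp h1
    exact le_of_tendsto' h3 (fun i => hmain i k hk)
  -- explicit formula for astar
  have hRP : (0:ℝ) < R ^ (p - 1) := pow_pos hR _
  have hP1s : (0:ℝ) < ((p:ℝ) + 1) ^ s := Real.rpow_pos_of_pos hppos _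
  have h2half : (0:ℝ) < (2:ℝ) ^ (((p:ℝ) - 1) / 2) := Real.rpow_pos_of_pos two_pos _
  have hRPr : R ^ (((p:ℝ) - 1) / 2 * 2) = R ^ (p - 1) := by
    have h1 : ((p:ℝ) - 1) / 2 * 2 = ((p - 1 : ℕ) : ℝ) := by
      rw [Nat.cast_sub (by omega : 1 ≤ p)]
      push_cast; ring
    rw [h1, Real.rpow_natCast]
  have hstep1 : astar = C ^ q * w ^ s := by
    rw [hadef, hXdef, Real.mul_rpow hCpos.le (Real.rpow_nonneg hwpos.le _),
      ← Real.rpow_mul hwpos.le, hαq]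
  have hZq : ((2 * R ^ 2) ^ (((p : ℝ) - 1) / ((p : ℝ) + 1))) ^ q
      = (2:ℝ) ^ (((p:ℝ) - 1) / 2) * R ^ (p - 1) := by
    have hbase : (0:ℝ) ≤ 2 * R ^ 2 := by positivity
    rw [← Real.rpow_mul hbase]
    rw [show ((p : ℝ) - 1) / ((p : ℝ) + 1) * q = ((p:ℝ) - 1) / 2 by
      rw [hqdef]; field_simp]
    rw [Real.mul_rpow (by norm_num) (by positivity)]
    congr 1
    rw [← Real.rpow_natCast R 2, ← Real.rpow_mul hR.le, mul_comm ((2:ℕ):ℝ)]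
    rw [show (((2:ℕ)):ℝ) = (2:ℝ) by norm_num, hRPr]
  have hCq : C ^ q = (1/4 : ℝ) ^ q * θv / ((2:ℝ) ^ (((p:ℝ) - 1) / 2) * R ^ (p - 1)) := by
    rw [hCdef]
    rw [Real.div_rpow (by positivity) (Real.rpow_nonneg (by positivity) _)]
    rw [Real.mul_rpow (by norm_num) (Real.rpow_nonneg hθpos.le _)]
    rw [← Real.rpow_mul hθpos.le]
    rw [show (2:ℝ) / ((p : ℝ) + 1) * q = 1 by rw [hqdef]; field_simp]
    rw [Real.rpow_one, hZq]
  have hws : w ^ s = (2:ℝ) ^ s / ((p:ℝ) + 1) ^ s := by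
    rw [hwdef, Real.div_rpow (by norm_num) hppos.le]
  have h2one : (1/4 : ℝ) ^ q * (2:ℝ) ^ s / (2:ℝ) ^ (((p:ℝ) - 1) / 2) = 1 := by
    have h14 : (1/4 : ℝ) = (2:ℝ) ^ (-2 : ℝ) := by
      rw [show (-2:ℝ) = ((-2 : ℤ) : ℝ) by norm_num, Real.rpow_intCast]
      norm_num
    rw [h14, ← Real.rpow_mul (by norm_num), ← Real.rpow_add two_pos,
      ← Real.rpow_sub two_pos]
    rw [show (-2) * q + s - ((p:ℝ) - 1) / 2 = 0 by rw [hqdef, hsdef]; ring]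
    exact Real.rpow_zero 2
  have hastar_eq : astar = θv / (((p:ℝ) + 1) ^ s * R ^ (p - 1)) := by
    rw [hstep1, hCq, hws]
    have hrearr : (1/4:ℝ) ^ q * θv / ((2:ℝ) ^ (((p:ℝ) - 1) / 2) * R ^ (p - 1))
        * ((2:ℝ) ^ s / ((p:ℝ) + 1) ^ s)
        = θv / (((p:ℝ) + 1) ^ s * R ^ (p - 1))
          * ((1/4:ℝ) ^ q * (2:ℝ) ^ s / (2:ℝ) ^ (((p:ℝ) - 1) / 2)) := by
      field_simp
    rw [hrearr, h2one, mul_one]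
  -- the numerical inequality 4 * (p+1)^s ≤ 2^E
  have hhalf : ((p:ℝ) + 1) / 2 ≤ (2:ℝ) ^ (((p:ℝ) - 1) / 2) := by
    apply le_of_pow_le_pow_left₀ (two_ne_zero) h2half.le
    have hr2 : ((2:ℝ) ^ (((p:ℝ) - 1) / 2)) ^ (2:ℕ) = (2:ℝ) ^ ((p:ℝ) - 1) := by
      rw [← Real.rpow_natCast ((2:ℝ) ^ (((p:ℝ) - 1) / 2)) 2,
        ← Real.rpow_mul (by norm_num)]
      norm_num
    rw [hr2]
    have h2p1 : (2:ℝ) ^ ((p:ℝ) - 1) = (2:ℝ) ^ ((p:ℝ) + 1) / 4 := by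
      rw [show (p:ℝ) - 1 = ((p:ℝ) + 1) - 2 by ring, Real.rpow_sub two_pos]
      congr 1
      rw [show (2:ℝ) = ((2:ℕ):ℝ) by norm_num, Real.rpow_natCast]
      norm_num
    have hnat : (((p+1)^2 : ℕ) : ℝ) ≤ ((2^(p+1) : ℕ) : ℝ) := by
      exact_mod_cast nat_sq_le_two_pow (p+1) (by omega)
    have hc1 : (((p+1)^2 : ℕ) : ℝ) = ((p:ℝ) + 1)^(2:ℕ) := by push_cast; ring
    have hc2 : ((2^(p+1) : ℕ) : ℝ) = (2:ℝ) ^ ((p:ℝ) + 1) := by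
      rw [show (p:ℝ) + 1 = ((p+1:ℕ):ℝ) by push_cast; ring, Real.rpow_natCast]
      push_cast; ring
    rw [h2p1]
    rw [hc1, hc2] at hnat
    have : (((p:ℝ) + 1) / 2)^(2:ℕ) = ((p:ℝ)+1)^(2:ℕ) / 4 := by ring
    rw [this]
    linarith
  have hkey : 4 * ((p:ℝ) + 1) ^ s ≤ (2:ℝ) ^ ((3 * ((p : ℝ) + 1) ^ 2 + 4) / 4) := by
    have hsplit : ((p:ℝ) + 1) ^ s = (2:ℝ) ^ s * (((p:ℝ)+1)/2) ^ s := by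
      rw [← Real.mul_rpow (by norm_num) (by positivity)]
      congr 1
      field_simp
    have hmono : (((p:ℝ)+1)/2) ^ s ≤ ((2:ℝ) ^ (((p:ℝ) - 1) / 2)) ^ s :=
      Real.rpow_le_rpow (by positivity) hhalf hspos.le
    have hcollect : 4 * ((2:ℝ) ^ s * ((2:ℝ) ^ (((p:ℝ) - 1) / 2)) ^ s)
        = (2:ℝ) ^ (2 + s + ((p:ℝ) - 1) / 2 * s) := by
      rw [← Real.rpow_mul (by norm_num)]
      rw [Real.rpow_add two_pos, Real.rpow_add two_pos]
      rw [show (2:ℝ) ^ (2:ℝ) = 4 by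
        rw [show (2:ℝ) = ((2:ℕ):ℝ) by norm_num] ; rw [Real.rpow_natCast] ; norm_num]
      ring
    have hexp : 2 + s + ((p:ℝ) - 1) / 2 * s ≤ (3 * ((p : ℝ) + 1) ^ 2 + 4) / 4 := by
      rw [hsdef]
      linarith [hp3]
    calc 4 * ((p:ℝ) + 1) ^ s = 4 * ((2:ℝ) ^ s * (((p:ℝ)+1)/2) ^ s) := by rw [hsplit]
      _ ≤ 4 * ((2:ℝ) ^ s * ((2:ℝ) ^ (((p:ℝ) - 1) / 2)) ^ s) := by
          have h2s : (0:ℝ) ≤ (2:ℝ) ^ s := (Real.rpow_pos_of_pos two_pos s).le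
          have := mul_le_mul_of_nonneg_left hmono h2s
          linarith
      _ = (2:ℝ) ^ (2 + s + ((p:ℝ) - 1) / 2 * s) := hcollect
      _ ≤ (2:ℝ) ^ ((3 * ((p : ℝ) + 1) ^ 2 + 4) / 4) := by
          exact Real.rpow_le_rpow_left_iff one_lt_two |>.mpr hexp
  -- conclude
  have hE : (0:ℝ) < (2:ℝ) ^ ((3 * ((p : ℝ) + 1) ^ 2 + 4) / 4) := Real.rpow_pos_of_pos two_pos _
  have hcM : (0:ℝ) < (2:ℝ) ^ ((3 * ((p : ℝ) + 1) ^ 2 + 4) / 4) * ((p : ℝ) + 1)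
      / (Nat.factorial p : ℝ) * Mp * R ^ (p - 1) := by positivity
  rw [ge_iff_le, ← hsdef]
  have hks : (0:ℝ) < (k:ℝ) ^ s := Real.rpow_pos_of_pos hkpos _
  have hDa : (k:ℝ) ^ s / ((2:ℝ) ^ ((3 * ((p : ℝ) + 1) ^ 2 + 4) / 4) * ((p : ℝ) + 1)
      / (Nat.factorial p : ℝ) * Mp * R ^ (p - 1)) ≤ astar * (k:ℝ) ^ s := by
    rw [div_le_iff₀ hcM]
    have h1 : 1 ≤ astar * ((2:ℝ) ^ ((3 * ((p : ℝ) + 1) ^ 2 + 4) / 4) * ((p : ℝ) + 1)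
        / (Nat.factorial p : ℝ) * Mp * R ^ (p - 1)) := by
      rw [hastar_eq, hθdef]
      rw [show (Nat.factorial p : ℝ) / (4 * ((p : ℝ) + 1) * Mp) / (((p:ℝ) + 1) ^ s * R ^ (p - 1))
          * ((2:ℝ) ^ ((3 * ((p : ℝ) + 1) ^ 2 + 4) / 4) * ((p : ℝ) + 1)
          / (Nat.factorial p : ℝ) * Mp * R ^ (p - 1))
          = (2:ℝ) ^ ((3 * ((p : ℝ) + 1) ^ 2 + 4) / 4) / (4 * ((p:ℝ) + 1) ^ s) by
        field_simp [hFpos.ne', hMp.ne', hppos.ne', hP1s.ne', hRP.ne']]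
      rw [le_div_iff₀ (by positivity)]
      linarith [hkey]
    calc (k:ℝ) ^ s = 1 * (k:ℝ) ^ s := (one_mul _).symm
      _ ≤ (astar * ((2:ℝ) ^ ((3 * ((p : ℝ) + 1) ^ 2 + 4) / 4) * ((p : ℝ) + 1)
          / (Nat.factorial p : ℝ) * Mp * R ^ (p - 1))) * (k:ℝ) ^ s :=
        mul_le_mul_of_nonneg_right h1 hks.le
      _ = astar * (k:ℝ) ^ s * ((2:ℝ) ^ ((3 * ((p : ℝ) + 1) ^ 2 + 4) / 4) * ((p : ℝ) + 1)
          / (Nat.factorial p : ℝ) * Mp * R ^ (p - 1)) := by ring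
  exact le_trans hDa hlim
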